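/- (Limit μ_∞ of the eigenvalues μ_k.) For every fixed real p, the sequence μ_k = −2·∫₀^p sin(2πx)·(cos(2πkx) − 1) dx converges as k → ∞ (k ∈ ℕ) to μ_∞ = (1 − cos(2πp))/π. -/

import Mathlib

open Real intervalIntegral

lemma integral_sin_cx (c p : ℝ) (hc : c ≠ 0) :
    ∫ x in (0:ℝ)..p, Real.sin (c * x) = (1 - Real.cos (c * p)) / c := by
  rw [intervalIntegral.integral_comp_mul_left Real.sin hc]
  simp [integral_sin, div_eq_inv_mul]

lemma sin_mul_cos_eq (a b : ℝ) :
    Real.sin a * Real.cos b = (Real.sin (a + b) + Real.sin (a - b)) / 2 := by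
  rw [Real.sin_add, Real.sin_sub]; ring

lemma f_eq (p : ℝ) (k : ℕ) (hk : 2 ≤ k) :
    (∫ x in (0:ℝ)..p, Real.sin (2 * Real.pi * x) * Real.cos (2 * Real.pi * (k:ℝ) * x))
    = (1 - Real.cos (2 * Real.pi * (1 + (k:ℝ)) * p)) / (2 * (2 * Real.pi * (1 + (k:ℝ))))
      + (1 - Real.cos (2 * Real.pi * (1 - (k:ℝ)) * p)) / (2 * (2 * Real.pi * (1 - (k:ℝ)))) := by
  have h1 : (2 * Real.pi * (1 + (k:ℝ))) ≠ 0 := by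
    have : (1:ℝ) + k > 0 := by positivity
    positivity
  have h2 : (2 * Real.pi * (1 - (k:ℝ))) ≠ 0 := by
    have hk' : (2:ℝ) ≤ k := by exact_mod_cast hk
    have : (1:ℝ) - k < 0 := by linarith
    have := Real.pi_ne_zero
    intro h
    rcases mul_eq_zero.1 h with h' | h'
    · rcases mul_eq_zero.1 h' with h'' | h'' <;> simp_all
    · linarith
  have heq : ∀ x : ℝ, Real.sin (2 * Real.pi * x) * Real.cos (2 * Real.pi * (k:ℝ) * x)
      = (Real.sin ((2 * Real.pi * (1 + (k:ℝ))) * x) + Real.sin ((2 * Real.pi * (1 - (k:ℝ))) * x)) / 2 := by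
    intro x
    rw [sin_mul_cos_eq]
    ring_nf
  rw [intervalIntegral.integral_congr (g := fun x =>
      (Real.sin ((2 * Real.pi * (1 + (k:ℝ))) * x) + Real.sin ((2 * Real.pi * (1 - (k:ℝ))) * x)) / 2)
      (fun x _ => heq x)]
  have i1 : IntervalIntegrable (fun x => Real.sin ((2 * Real.pi * (1 + (k:ℝ))) * x)) MeasureTheory.volume 0 p := by
    apply Continuous.intervalIntegrable; continuity
  have i2 : IntervalIntegrable (fun x => Real.sin ((2 * Real.pi * (1 - (k:ℝ))) * x)) MeasureTheory.volume 0 p := by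
    apply Continuous.intervalIntegrable; continuity
  rw [intervalIntegral.integral_div, intervalIntegral.integral_add i1 i2,
    integral_sin_cx _ _ h1, integral_sin_cx _ _ h2]
  field_simp

theorem mu_k_limit (p : ℝ) :
    Filter.Tendsto
      (fun k : ℕ => -2 * ∫ x in (0 : ℝ)..p,
        Real.sin (2 * Real.pi * x) * (Real.cos (2 * Real.pi * (k : ℝ) * x) - 1))
      Filter.atTop
      (nhds ((1 - Real.cos (2 * Real.pi * p)) / Real.pi)) := by
  have hpi := Real.pi_pos
  -- split the integral
  have hsplit : ∀ k : ℕ,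
      (-2 * ∫ x in (0 : ℝ)..p,
        Real.sin (2 * Real.pi * x) * (Real.cos (2 * Real.pi * (k : ℝ) * x) - 1))
      = -2 * (∫ x in (0:ℝ)..p, Real.sin (2 * Real.pi * x) * Real.cos (2 * Real.pi * (k:ℝ) * x))
        + (1 - Real.cos (2 * Real.pi * p)) / Real.pi := by
    intro k
    have i1 : IntervalIntegrable (fun x => Real.sin (2 * Real.pi * x) * Real.cos (2 * Real.pi * (k:ℝ) * x)) MeasureTheory.volume 0 p := by
      apply Continuous.intervalIntegrable; continuity
    have i2 : IntervalIntegrable (fun x => Real.sin (2 * Real.pi * x)) MeasureTheory.volume 0 p := by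
      apply Continuous.intervalIntegrable; continuity
    have : (∫ x in (0 : ℝ)..p,
        Real.sin (2 * Real.pi * x) * (Real.cos (2 * Real.pi * (k : ℝ) * x) - 1))
      = (∫ x in (0:ℝ)..p, Real.sin (2 * Real.pi * x) * Real.cos (2 * Real.pi * (k:ℝ) * x))
        - ∫ x in (0:ℝ)..p, Real.sin (2 * Real.pi * x) := by
      rw [← intervalIntegral.integral_sub i1 i2]
      congr 1; ext x; ring
    rw [this, integral_sin_cx (2 * Real.pi) p (by positivity)]
    generalize (∫ x in (0:ℝ)..p, Real.sin (2 * Real.pi * x) * Real.cos (2 * Real.pi * (k:ℝ) * x)) = I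
    field_simp
    ring
  simp only [hsplit]
  have hlim0 : Filter.Tendsto
      (fun k : ℕ => (∫ x in (0:ℝ)..p, Real.sin (2 * Real.pi * x) * Real.cos (2 * Real.pi * (k:ℝ) * x)))
      Filter.atTop (nhds 0) := by
    apply squeeze_zero_norm' (a := fun k : ℕ => 1 / (Real.pi * ((k:ℝ) - 1)))
    · filter_upwards [Filter.eventually_ge_atTop 2] with k hk
      rw [f_eq p k hk]
      have hk' : (2:ℝ) ≤ (k:ℝ) := by exact_mod_cast hk
      have hb1 : |(1 - Real.cos (2 * Real.pi * (1 + (k:ℝ)) * p)) / (2 * (2 * Real.pi * (1 + (k:ℝ))))|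
          ≤ 1 / (2 * Real.pi * (1 + (k:ℝ)))  := by
        rw [abs_div]
        have hden : (0:ℝ) < 2 * (2 * Real.pi * (1 + (k:ℝ))) := by positivity
        rw [abs_of_pos hden]
        rw [div_le_div_iff₀ hden (by positivity)]
        have : |1 - Real.cos (2 * Real.pi * (1 + (k:ℝ)) * p)| ≤ 2 := by
          have := Real.neg_one_le_cos (2 * Real.pi * (1 + (k:ℝ)) * p)
          have := Real.cos_le_one (2 * Real.pi * (1 + (k:ℝ)) * p)
          rw [abs_le]; constructor <;> linarith
        nlinarith [Real.pi_pos]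
      have hb2 : |(1 - Real.cos (2 * Real.pi * (1 - (k:ℝ)) * p)) / (2 * (2 * Real.pi * (1 - (k:ℝ))))|
          ≤ 1 / (2 * Real.pi * ((k:ℝ) - 1)) := by
        rw [abs_div]
        have habs : |2 * (2 * Real.pi * (1 - (k:ℝ)))| = 2 * (2 * Real.pi * ((k:ℝ) - 1)) := by
          rw [abs_mul, abs_mul, abs_of_pos (by norm_num : (0:ℝ) < 2),
            abs_of_pos (by positivity : (0:ℝ) < 2 * Real.pi), abs_of_neg (by linarith : (1:ℝ) - k < 0)]
          ring
        rw [habs]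
        have hden : (0:ℝ) < 2 * (2 * Real.pi * ((k:ℝ) - 1)) := by
          have : (0:ℝ) < (k:ℝ) - 1 := by linarith
          positivity
        have hpos : (0:ℝ) < (k:ℝ) - 1 := by linarith
        rw [div_le_div_iff₀ hden (by positivity)]
        have : |1 - Real.cos (2 * Real.pi * (1 - (k:ℝ)) * p)| ≤ 2 := by
          have := Real.neg_one_le_cos (2 * Real.pi * (1 - (k:ℝ)) * p)
          have := Real.cos_le_one (2 * Real.pi * (1 - (k:ℝ)) * p)
          rw [abs_le]; constructor <;> linarith
        nlinarith [Real.pi_pos]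
      calc ‖(1 - Real.cos (2 * Real.pi * (1 + (k:ℝ)) * p)) / (2 * (2 * Real.pi * (1 + (k:ℝ))))
            + (1 - Real.cos (2 * Real.pi * (1 - (k:ℝ)) * p)) / (2 * (2 * Real.pi * (1 - (k:ℝ))))‖
          ≤ |(1 - Real.cos (2 * Real.pi * (1 + (k:ℝ)) * p)) / (2 * (2 * Real.pi * (1 + (k:ℝ))))|
            + |(1 - Real.cos (2 * Real.pi * (1 - (k:ℝ)) * p)) / (2 * (2 * Real.pi * (1 - (k:ℝ))))| :=
            abs_add_le _ _
        _ ≤ 1 / (2 * Real.pi * (1 + (k:ℝ))) + 1 / (2 * Real.pi * ((k:ℝ) - 1)) := add_le_add hb1 hb2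
        _ ≤ 1 / (2 * Real.pi * ((k:ℝ) - 1)) + 1 / (2 * Real.pi * ((k:ℝ) - 1)) := by
            gcongr
            · have : (0:ℝ) < (k:ℝ) - 1 := by linarith
              positivity
            · linarith
        _ = 1 / (Real.pi * ((k:ℝ) - 1)) := by
            have h : (0:ℝ) < (k:ℝ) - 1 := by linarith
            field_simp; ring
    · -- tendsto 1/(π(k-1)) → 0
      have : Filter.Tendsto (fun k : ℕ => Real.pi * ((k:ℝ) - 1)) Filter.atTop Filter.atTop := by
        apply Filter.Tendsto.const_mul_atTop hpi
        apply Filter.tendsto_atTop_add_const_right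
        exact tendsto_natCast_atTop_atTop
      have h2 : Filter.Tendsto (fun k : ℕ => (Real.pi * ((k:ℝ) - 1))⁻¹) Filter.atTop (nhds 0) :=
        tendsto_inv_atTop_zero.comp this
      simpa using h2
  have := (hlim0.const_mul (-2)).add_const ((1 - Real.cos (2 * Real.pi * p)) / Real.pi)
  simpa using this
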